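/- Let k be a field and m ≥ 2. For every i ∈ ℤ/m and all integers r > s ≥ 0, one has dim_k End(S_{i+1}(r) ⊕ S_i(s+1)) = dim_k End(S_i(r+1) ⊕ S_{i+1}(s)) + 1. -/

import Mathlib

open Module

variable (k : Type) [Field k] (m : ℕ)

/-- The space of homomorphisms between two nilpotent representations of the cyclic quiver
with `m` vertices, each encoded as a `ℤ/m`-graded vector space together with a (nilpotent)
operator homogeneous of degree `1`: a homomorphism is a linear map preserving the grading
and intertwining the two operators. -/
def RepHom {V W : Type} [AddCommGroup V] [Module k V] [AddCommGroup W] [Module k W]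
    (gV : ZMod m → Submodule k V) (TV : V →ₗ[k] V)
    (gW : ZMod m → Submodule k W) (TW : W →ₗ[k] W) : Submodule k (V →ₗ[k] W) where
  carrier := {f | (∀ j : ZMod m, ∀ v ∈ gV j, f v ∈ gW j) ∧ f ∘ₗ TV = TW ∘ₗ f}
  add_mem' := by
    rintro f g ⟨hf1, hf2⟩ ⟨hg1, hg2⟩
    refine ⟨fun j v hv => ?_, ?_⟩
    · simpa using add_mem (hf1 j v hv) (hg1 j v hv)
    · simp only [LinearMap.add_comp, LinearMap.comp_add, hf2, hg2]
  zero_mem' := ⟨fun j v hv => by simp, by simp⟩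
  smul_mem' := by
    rintro c f ⟨hf1, hf2⟩
    refine ⟨fun j v hv => ?_, ?_⟩
    · simpa using Submodule.smul_mem _ c (hf1 j v hv)
    · simp only [LinearMap.smul_comp, LinearMap.comp_smul, hf2]

/-- The shift operator `e_t ↦ e_{t+1}` (and `e_{a-1} ↦ 0`) on `k^a`; this is the underlying
nilpotent operator of the indecomposable representation `S_i(a)`. -/
def shiftMap (a : ℕ) : (Fin a → k) →ₗ[k] (Fin a → k) where
  toFun f t := if h : (t : ℕ) = 0 then 0
    else f ⟨(t : ℕ) - 1, Nat.lt_of_le_of_lt (Nat.sub_le _ _) t.isLt⟩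
  map_add' f g := by
    funext t
    by_cases h : (t : ℕ) = 0 <;> simp [h]
  map_smul' c f := by
    funext t
    by_cases h : (t : ℕ) = 0 <;> simp [h]

/-- The grading of the indecomposable representation `S_i(a)` on `k^a`: the basis vector
`e_t` is homogeneous of degree `i + t (mod m)`. -/
def sGrading (i : ZMod m) (a : ℕ) (j : ZMod m) : Submodule k (Fin a → k) where
  carrier := {f | ∀ t : Fin a, i + ((t : ℕ) : ZMod m) ≠ j → f t = 0}
  add_mem' := fun hf hg t ht => by
    rw [Pi.add_apply, hf t ht, hg t ht, add_zero]
  zero_mem' := fun t _ => rfl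
  smul_mem' := fun c f hf t ht => by rw [Pi.smul_apply, hf t ht, smul_zero]

section Aux

variable {k m}

lemma mem_repHom_iff {V W : Type} [AddCommGroup V] [Module k V] [AddCommGroup W] [Module k W]
    {gV : ZMod m → Submodule k V} {TV : V →ₗ[k] V}
    {gW : ZMod m → Submodule k W} {TW : W →ₗ[k] W} {f : V →ₗ[k] W} :
    f ∈ RepHom k m gV TV gW TW ↔
      (∀ j : ZMod m, ∀ v ∈ gV j, f v ∈ gW j) ∧ f ∘ₗ TV = TW ∘ₗ f := Iff.rfl

section Prod

variable {V V' W W' : Type} [AddCommGroup V] [Module k V] [AddCommGroup V'] [Module k V']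
  [AddCommGroup W] [Module k W] [AddCommGroup W'] [Module k W']

/-- decomposition of a linear map between products into four components -/
def homProdEquiv : ((V × V') →ₗ[k] (W × W')) ≃ₗ[k]
    ((V →ₗ[k] W) × (V →ₗ[k] W')) × ((V' →ₗ[k] W) × (V' →ₗ[k] W')) where
  toFun F := ((LinearMap.fst k W W' ∘ₗ F ∘ₗ LinearMap.inl k V V',
               LinearMap.snd k W W' ∘ₗ F ∘ₗ LinearMap.inl k V V'),
              (LinearMap.fst k W W' ∘ₗ F ∘ₗ LinearMap.inr k V V',
               LinearMap.snd k W W' ∘ₗ F ∘ₗ LinearMap.inr k V V'))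
  invFun q := LinearMap.prod (q.1.1.coprod q.2.1) (q.1.2.coprod q.2.2)
  map_add' F G := by
    refine Prod.ext (Prod.ext ?_ ?_) (Prod.ext ?_ ?_) <;> ext v <;> simp
  map_smul' c F := by
    refine Prod.ext (Prod.ext ?_ ?_) (Prod.ext ?_ ?_) <;> ext v <;> simp
  left_inv F := by
    apply LinearMap.ext
    rintro ⟨v, v'⟩
    have h : ((v, v') : V × V') = (v, 0) + (0, v') := by simp
    simp only [LinearMap.prod_apply, LinearMap.coprod_apply, LinearMap.comp_apply,
      LinearMap.fst_apply, LinearMap.snd_apply, LinearMap.inl_apply, LinearMap.inr_apply,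
      Function.prod]
    rw [h, map_add]
    rfl
  right_inv q := by
    refine Prod.ext (Prod.ext ?_ ?_) (Prod.ext ?_ ?_) <;> ext v <;> simp

variable (gV : ZMod m → Submodule k V) (TV : V →ₗ[k] V)
  (gV' : ZMod m → Submodule k V') (TV' : V' →ₗ[k] V')
  (gW : ZMod m → Submodule k W) (TW : W →ₗ[k] W)
  (gW' : ZMod m → Submodule k W') (TW' : W' →ₗ[k] W')

lemma repHom_prod_map :
    (RepHom k m (fun j => (gV j).prod (gV' j)) (TV.prodMap TV')
        (fun j => (gW j).prod (gW' j)) (TW.prodMap TW')).map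
        (homProdEquiv (k := k) (V := V) (V' := V') (W := W) (W' := W')).toLinearMap
      = ((RepHom k m gV TV gW TW).prod (RepHom k m gV TV gW' TW')).prod
        ((RepHom k m gV' TV' gW TW).prod (RepHom k m gV' TV' gW' TW')) := by
  apply le_antisymm
  · rintro x hx
    rw [Submodule.mem_map] at hx
    obtain ⟨F, hF, rfl⟩ := hx
    obtain ⟨hF1, hF2⟩ := hF
    have key : ∀ v : V × V', F ((TV.prodMap TV') v) = (TW.prodMap TW') (F v) :=
      fun v => LinearMap.congr_fun hF2 v
    refine ⟨⟨⟨fun j v hv => ?_, ?_⟩, fun j v hv => ?_, ?_⟩,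
            ⟨fun j v hv => ?_, ?_⟩, fun j v hv => ?_, ?_⟩
    · exact (hF1 j (v, 0) ⟨hv, (gV' j).zero_mem⟩).1
    · ext v
      have h := key (v, 0)
      simp only [LinearMap.prodMap_apply, map_zero] at h
      show (F (TV v, 0)).1 = TW ((F (v, 0)).1)
      rw [h]
    · exact (hF1 j (v, 0) ⟨hv, (gV' j).zero_mem⟩).2
    · ext v
      have h := key (v, 0)
      simp only [LinearMap.prodMap_apply, map_zero] at h
      show (F (TV v, 0)).2 = TW' ((F (v, 0)).2)
      rw [h]
    · exact (hF1 j (0, v) ⟨(gV j).zero_mem, hv⟩).1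
    · ext v
      have h := key (0, v)
      simp only [LinearMap.prodMap_apply, map_zero] at h
      show (F (0, TV' v)).1 = TW ((F (0, v)).1)
      rw [h]
    · exact (hF1 j (0, v) ⟨(gV j).zero_mem, hv⟩).2
    · ext v
      have h := key (0, v)
      simp only [LinearMap.prodMap_apply, map_zero] at h
      show (F (0, TV' v)).2 = TW' ((F (0, v)).2)
      rw [h]
  · rintro ⟨⟨f11, f12⟩, f21, f22⟩ ⟨⟨h11, h12⟩, h21, h22⟩
    rw [Submodule.mem_map]
    refine ⟨(f11.coprod f21).prod (f12.coprod f22), ⟨fun j v hv => ?_, ?_⟩, ?_⟩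
    · obtain ⟨v, v'⟩ := v
      obtain ⟨hv, hv'⟩ := hv
      exact ⟨add_mem (h11.1 j v hv) (h21.1 j v' hv'),
             add_mem (h12.1 j v hv) (h22.1 j v' hv')⟩
    · apply LinearMap.ext
      rintro ⟨v, v'⟩
      have e11 : f11 (TV v) = TW (f11 v) := LinearMap.congr_fun h11.2 v
      have e21 : f21 (TV' v') = TW (f21 v') := LinearMap.congr_fun h21.2 v'
      have e12 : f12 (TV v) = TW' (f12 v) := LinearMap.congr_fun h12.2 v
      have e22 : f22 (TV' v') = TW' (f22 v') := LinearMap.congr_fun h22.2 v'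
      show (f11 (TV v) + f21 (TV' v'), f12 (TV v) + f22 (TV' v'))
        = (TW (f11 v + f21 v'), TW' (f12 v + f22 v'))
      rw [e11, e21, e12, e22, map_add, map_add]
    · apply Prod.ext <;> apply Prod.ext <;> ext v <;> simp [homProdEquiv]

/-- my own product equiv for submodules -/
def submoduleProdEquiv {M N : Type} [AddCommGroup M] [Module k M] [AddCommGroup N] [Module k N]
    (p : Submodule k M) (q : Submodule k N) : (p.prod q) ≃ₗ[k] p × q where
  toFun x := (⟨x.1.1, x.2.1⟩, ⟨x.1.2, x.2.2⟩)
  invFun x := ⟨(x.1.1, x.2.1), ⟨x.1.2, x.2.2⟩⟩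
  map_add' x y := rfl
  map_smul' c x := rfl
  left_inv x := rfl
  right_inv x := rfl

lemma finrank_repHom_prod
    [FiniteDimensional k V] [FiniteDimensional k V']
    [FiniteDimensional k W] [FiniteDimensional k W'] :
    finrank k (RepHom k m (fun j => (gV j).prod (gV' j)) (TV.prodMap TV')
        (fun j => (gW j).prod (gW' j)) (TW.prodMap TW'))
      = finrank k (RepHom k m gV TV gW TW) + finrank k (RepHom k m gV TV gW' TW')
        + finrank k (RepHom k m gV' TV' gW TW) + finrank k (RepHom k m gV' TV' gW' TW') := by
  rw [← LinearEquiv.finrank_map_eq (homProdEquiv (k := k) (V := V) (V' := V') (W := W) (W' := W')) _,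
    show ((homProdEquiv (k := k) (V := V) (V' := V') (W := W) (W' := W') :
        ((V × V') →ₗ[k] (W × W')) →ₗ[k] _))
      = (homProdEquiv (k := k) (V := V) (V' := V') (W := W) (W' := W')).toLinearMap from rfl,
    repHom_prod_map gV TV gV' TV' gW TW gW' TW']
  rw [(submoduleProdEquiv ((RepHom k m gV TV gW TW).prod (RepHom k m gV TV gW' TW'))
      ((RepHom k m gV' TV' gW TW).prod (RepHom k m gV' TV' gW' TW'))).finrank_eq,
    Module.finrank_prod,
    (submoduleProdEquiv (RepHom k m gV TV gW TW) (RepHom k m gV TV gW' TW')).finrank_eq,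
    Module.finrank_prod,
    (submoduleProdEquiv (RepHom k m gV' TV' gW TW) (RepHom k m gV' TV' gW' TW')).finrank_eq,
    Module.finrank_prod]
  ring

end Prod

end Aux


section Single

variable {k m}

lemma shiftMap_apply {a : ℕ} (v : Fin a → k) (u : Fin a) :
    shiftMap k a v u = if h : (u : ℕ) = 0 then 0
      else v ⟨(u : ℕ) - 1, Nat.lt_of_le_of_lt (Nat.sub_le _ _) u.isLt⟩ := rfl

lemma comm_pow {V W : Type} [AddCommGroup V] [Module k V] [AddCommGroup W] [Module k W]
    {f : V →ₗ[k] W} {TV : V →ₗ[k] V} {TW : W →ₗ[k] W} (hf : f ∘ₗ TV = TW ∘ₗ f) (n : ℕ)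
    (v : V) : f ((TV ^ n) v) = (TW ^ n) (f v) := by
  induction n generalizing v with
  | zero => simp
  | succ n ih =>
    have h : f (TV v) = TW (f v) := LinearMap.congr_fun hf v
    rw [pow_succ, pow_succ, Module.End.mul_apply, Module.End.mul_apply, ih (TV v), h]

lemma shiftMap_pow_apply {b : ℕ} (n : ℕ) (g : Fin b → k) (u : Fin b) :
    ((shiftMap k b ^ n) g) u = if h : n ≤ (u : ℕ) then
      g ⟨(u : ℕ) - n, by have := u.isLt; omega⟩ else 0 := by
  induction n generalizing g u with
  | zero =>
    rw [pow_zero, Module.End.one_apply, dif_pos (Nat.zero_le _)]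
    congr 1 <;> exact Fin.ext (by omega)
  | succ n ih =>
    rw [pow_succ, Module.End.mul_apply, ih (shiftMap k b g) u]
    by_cases h : n ≤ (u : ℕ)
    · rw [dif_pos h, shiftMap_apply]
      by_cases h2 : n + 1 ≤ (u : ℕ)
      · rw [dif_neg (by simp; omega), dif_pos h2]
        congr 1 <;> exact Fin.ext (by omega)
      · rw [dif_pos (by simp; omega), dif_neg h2]
    · rw [dif_neg h, dif_neg (by omega)]

lemma shiftMap_single {a : ℕ} (t : Fin a) (c : k) :
    shiftMap k a (Pi.single t c) =
      if h : (t : ℕ) + 1 < a then Pi.single (⟨(t : ℕ) + 1, h⟩ : Fin a) c else 0 := by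
  funext u
  rw [shiftMap_apply]
  by_cases h : (t : ℕ) + 1 < a
  · rw [dif_pos h]
    by_cases h0 : (u : ℕ) = 0
    · rw [dif_pos h0, Pi.single_apply, if_neg (by simp [Fin.ext_iff]; omega)]
    · rw [dif_neg h0, Pi.single_apply, Pi.single_apply]
      simp only [Fin.ext_iff]
      split_ifs <;> first | rfl | omega
  · rw [dif_neg h]
    by_cases h0 : (u : ℕ) = 0
    · rw [dif_pos h0]; rfl
    · rw [dif_neg h0, Pi.single_apply, if_neg (by have := u.isLt; simp [Fin.ext_iff]; omega)]
      rfl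

lemma shiftMap_pow_single {a : ℕ} (ha : 0 < a) (n : ℕ) :
    (shiftMap k a ^ n) (Pi.single (⟨0, ha⟩ : Fin a) (1 : k)) =
      if h : n < a then Pi.single (⟨n, h⟩ : Fin a) 1 else 0 := by
  induction n with
  | zero => rw [pow_zero, Module.End.one_apply, dif_pos ha]
  | succ n ih =>
    rw [pow_succ', Module.End.mul_apply, ih]
    by_cases h : n < a
    · rw [dif_pos h, shiftMap_single]
    · rw [dif_neg h, map_zero, dif_neg (by omega)]

lemma single_mem_sGrading (i : ZMod m) {a : ℕ} (t : Fin a) :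
    Pi.single t (1 : k) ∈ sGrading k m i a (i + ((t : ℕ) : ZMod m)) := by
  intro t' ht'
  rcases eq_or_ne t' t with rfl | hne
  · exact absurd rfl ht'
  · exact Pi.single_eq_of_ne hne 1

end Single

def shiftBy (a b c : ℕ) : (Fin a → k) →ₗ[k] (Fin b → k) where
  toFun v u := if h : c ≤ (u : ℕ) ∧ (u : ℕ) - c < a then v ⟨(u : ℕ) - c, h.2⟩ else 0
  map_add' v w := by
    funext u
    by_cases h : c ≤ (u : ℕ) ∧ (u : ℕ) - c < a <;> simp [h]
  map_smul' r v := by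
    funext u
    by_cases h : c ≤ (u : ℕ) ∧ (u : ℕ) - c < a <;> simp [h]

section ShiftBy

variable {k m}

lemma shiftBy_apply {a b c : ℕ} (v : Fin a → k) (u : Fin b) :
    shiftBy k a b c v u
      = if h : c ≤ (u : ℕ) ∧ (u : ℕ) - c < a then v ⟨(u : ℕ) - c, h.2⟩ else 0 := rfl

lemma shiftBy_single {a b c : ℕ} (ha : 0 < a) (hc : c < b) :
    shiftBy k a b c (Pi.single (⟨0, ha⟩ : Fin a) (1 : k)) = Pi.single (⟨c, hc⟩ : Fin b) 1 := by
  funext u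
  rw [shiftBy_apply, Pi.single_apply]
  by_cases h : c ≤ (u : ℕ) ∧ (u : ℕ) - c < a
  · rw [dif_pos h, Pi.single_apply]
    simp only [Fin.ext_iff]
    split_ifs <;> first | rfl | omega
  · rw [dif_neg h, if_neg (by simp only [Fin.ext_iff]; omega)]

lemma shiftBy_mem_repHom (i j : ZMod m) {a b c : ℕ} (hc1 : b - a ≤ c)
    (hc2 : ((c : ℕ) : ZMod m) = i - j) :
    shiftBy k a b c ∈ RepHom k m (sGrading k m i a) (shiftMap k a)
      (sGrading k m j b) (shiftMap k b) := by
  constructor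
  · intro j₀ v hv u hu
    rw [shiftBy_apply]
    by_cases h : c ≤ (u : ℕ) ∧ (u : ℕ) - c < a
    · rw [dif_pos h]
      apply hv
      intro heq
      apply hu
      have hsplit : (((u : ℕ)) : ZMod m) = ((c : ℕ) : ZMod m) + (((u : ℕ) - c : ℕ) : ZMod m) := by
        rw [← Nat.cast_add]
        congr 1
        omega
      rw [hsplit, hc2, ← heq]
      ring
    · rw [dif_neg h]
  · apply LinearMap.ext
    intro v
    funext u
    have hub := u.isLt
    show shiftBy k a b c (shiftMap k a v) u = shiftMap k b (shiftBy k a b c v) u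
    simp only [shiftMap_apply, shiftBy_apply, Fin.val_mk]
    split_ifs <;>
      first
        | rfl
        | omega
        | (exfalso; omega)
        | (congr 1 <;> exact Fin.ext (by simp only [Fin.val_mk]; omega))

end ShiftBy

def suppSubmodule (n : ℕ) (P : Fin n → Prop) [DecidablePred P] : Submodule k (Fin n → k) where
  carrier := {g | ∀ u, ¬ P u → g u = 0}
  add_mem' := fun hf hg u hu => by
    rw [Pi.add_apply, hf u hu, hg u hu, add_zero]
  zero_mem' := fun u _ => rfl
  smul_mem' := fun c f hf u hu => by rw [Pi.smul_apply, hf u hu, smul_zero]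

def suppEquiv (n : ℕ) (P : Fin n → Prop) [DecidablePred P] :
    suppSubmodule k n P ≃ₗ[k] ({u : Fin n // P u} → k) where
  toFun g u := g.1 u.1
  map_add' _ _ := rfl
  map_smul' _ _ := rfl
  invFun h := ⟨fun u => if hu : P u then h ⟨u, hu⟩ else 0, fun u hu => dif_neg hu⟩
  left_inv g := by
    apply Subtype.ext
    funext u
    by_cases hu : P u
    · simp only [dif_pos hu]
    · simp only [dif_neg hu]
      exact (g.2 u hu).symm
  right_inv h := by
    funext u
    simp only [dif_pos u.2]

lemma finrank_suppSubmodule (n : ℕ) (P : Fin n → Prop) [DecidablePred P] :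
    finrank k (suppSubmodule k n P) = (Finset.univ.filter P).card := by
  rw [(suppEquiv k n P).finrank_eq, Module.finrank_pi, Fintype.card_subtype]

section Main

variable {k m}

theorem finrank_repHom_single (i j : ZMod m) (a b : ℕ) :
    finrank k (RepHom k m (sGrading k m i a) (shiftMap k a)
        (sGrading k m j b) (shiftMap k b))
      = ((Finset.range b).filter
          (fun c => b - a ≤ c ∧ ((c : ℕ) : ZMod m) = i - j)).card := by
  rcases Nat.eq_zero_or_pos a with rfl | ha
  · haveI : Subsingleton ((Fin 0 → k) →ₗ[k] (Fin b → k)) :=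
      ⟨fun f g => LinearMap.ext fun v => by
        rw [Subsingleton.elim v 0, map_zero, map_zero]⟩
    rw [finrank_zero_of_subsingleton]
    symm
    rw [Finset.card_eq_zero, Finset.filter_eq_empty_iff]
    intro c hc
    rw [Finset.mem_range] at hc
    rintro ⟨h1, -⟩
    omega
  · classical
    set P : Fin b → Prop := fun u => b - a ≤ (u : ℕ) ∧ (((u : ℕ)) : ZMod m) = i - j with hPdef
    set e0 : Fin a → k := Pi.single (⟨0, ha⟩ : Fin a) 1 with he0
    set R := RepHom k m (sGrading k m i a) (shiftMap k a) (sGrading k m j b) (shiftMap k b)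
      with hR
    let Φ : R →ₗ[k] (Fin b → k) :=
      { toFun := fun f => f.1 e0
        map_add' := fun f g => rfl
        map_smul' := fun c f => rfl }
    have key : ∀ f : R, ∀ t : Fin a,
        f.1 (Pi.single t (1 : k)) = (shiftMap k b ^ (t : ℕ)) (f.1 e0) := by
      intro f t
      have h1 : (shiftMap k a ^ (t : ℕ)) e0 = Pi.single t 1 := by
        rw [he0, shiftMap_pow_single ha, dif_pos t.isLt]
      rw [← h1, comm_pow (mem_repHom_iff.mp f.2).2]
    have hinj : Function.Injective Φ := by
      intro f g hfg
      apply Subtype.ext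
      apply LinearMap.pi_ext
      intro t x
      have hx : (Pi.single t x : Fin a → k) = x • (Pi.single t 1 : Fin a → k) := by
        rw [← Pi.single_smul, smul_eq_mul, mul_one]
      rw [hx, map_smul, map_smul, key f t, key g t,
        show f.1 e0 = g.1 e0 from hfg]
    have hlow : ∀ f : R, ∀ u : Fin b, (u : ℕ) < b - a → f.1 e0 u = 0 := by
      intro f u hu'
      have hTa : (shiftMap k b ^ a) (f.1 e0) = 0 := by
        rw [← comm_pow (mem_repHom_iff.mp f.2).2 a e0, he0, shiftMap_pow_single ha,
          dif_neg (lt_irrefl a), map_zero]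
      have hv := congrFun hTa ⟨(u : ℕ) + a, by have := u.isLt; omega⟩
      rw [shiftMap_pow_apply, dif_pos (by simp only [Fin.val_mk]; omega)] at hv
      rw [show u = ⟨(((u : ℕ) + a : ℕ) : ℕ) - a, by have := u.isLt; omega⟩ from
        Fin.ext (by simp only [Fin.val_mk]; omega)]
      exact hv
    have hdeg : ∀ f : R, ∀ u : Fin b, j + ((u : ℕ) : ZMod m) ≠ i → f.1 e0 u = 0 := by
      intro f u hu
      have he0m : e0 ∈ sGrading k m i a i := by
        have h := single_mem_sGrading (k := k) (m := m) i (⟨0, ha⟩ : Fin a)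
        simpa using h
      exact (mem_repHom_iff.mp f.2).1 i e0 he0m u hu
    have hrange : LinearMap.range Φ = suppSubmodule k b P := by
      apply le_antisymm
      · rintro _ ⟨f, rfl⟩
        intro u hu
        show f.1 e0 u = 0
        by_cases hc : (((u : ℕ)) : ZMod m) = i - j
        · apply hlow
          have hnot : ¬ (b - a ≤ (u : ℕ)) := fun hle => hu ⟨hle, hc⟩
          omega
        · apply hdeg
          intro heq
          apply hc
          rw [← heq]
          ring
      · intro g hg
        refine ⟨⟨∑ c : Fin b, g c • shiftBy k a b (c : ℕ), ?_⟩, ?_⟩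
        · apply Submodule.sum_mem
          intro c _
          by_cases hgc : g c = 0
          · rw [hgc, zero_smul]
            exact Submodule.zero_mem _
          · have hPc : P c := by
              by_contra hPc
              exact hgc (hg c hPc)
            exact Submodule.smul_mem _ _ (shiftBy_mem_repHom i j hPc.1 hPc.2)
        · show (∑ c : Fin b, g c • shiftBy k a b (c : ℕ)) e0 = g
          rw [LinearMap.sum_apply]
          have hterm : ∀ c : Fin b, (g c • shiftBy k a b (c : ℕ)) e0 = Pi.single c (g c) := by
            intro c
            rw [LinearMap.smul_apply, he0, shiftBy_single ha c.isLt]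
            rw [← Pi.single_smul, smul_eq_mul, mul_one]
          rw [Finset.sum_congr rfl (fun c _ => hterm c), Finset.univ_sum_single]
    have e1 : finrank k R = finrank k (LinearMap.range Φ) :=
      (LinearEquiv.ofInjective Φ hinj).finrank_eq
    rw [e1, hrange, finrank_suppSubmodule]
    rw [Finset.card_filter, Finset.card_filter]
    exact Fin.sum_univ_eq_sum_range
      (fun c => if b - a ≤ c ∧ ((c : ℕ) : ZMod m) = i - j then 1 else 0) b

end Main

def cnt (m n : ℕ) (d : ZMod m) : ℕ :=
  ((Finset.range n).filter (fun c => ((c : ℕ) : ZMod m) = d)).card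

section Count

lemma cnt_succ (n : ℕ) (d : ZMod m) :
    cnt m (n + 1) d = cnt m n d + if ((n : ℕ) : ZMod m) = d then 1 else 0 := by
  unfold cnt
  rw [Finset.range_add_one, Finset.filter_insert]
  split_ifs with h
  · rw [Finset.card_insert_of_notMem (fun hmem => by
      have := (Finset.mem_filter.mp hmem).1
      rw [Finset.mem_range] at this
      omega), add_comm]
  · rw [add_zero]

lemma cnt_shift (n : ℕ) (d : ZMod m) :
    cnt m (n + 1) (d + 1) = cnt m n d + if d + 1 = 0 then 1 else 0 := by
  induction n with
  | zero =>
    have h0 : cnt m 0 (d + 1) = 0 := rfl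
    have h1 : cnt m 0 d = 0 := rfl
    rw [cnt_succ, h0, h1]
    simp only [Nat.cast_zero, zero_add]
    congr 1
    exact propext eq_comm
  | succ n ih =>
    rw [cnt_succ (m := m) (n + 1) (d + 1), ih, cnt_succ (m := m) n d]
    have hc : (((n + 1 : ℕ)) : ZMod m) = ((n : ℕ) : ZMod m) + 1 := by push_cast; ring
    rw [hc]
    have hiff : (((n : ℕ) : ZMod m) + 1 = d + 1) ↔ (((n : ℕ) : ZMod m) = d) := by
      constructor
      · intro h; exact add_right_cancel h
      · intro h; rw [h]
    by_cases h : ((n : ℕ) : ZMod m) = d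
    · rw [if_pos (hiff.mpr h), if_pos h]; omega
    · rw [if_neg (fun hh => h (hiff.mp hh)), if_neg h]
      omega

lemma filter_card_all (a b : ℕ) (d : ZMod m) (hba : b ≤ a) :
    ((Finset.range b).filter (fun c => b - a ≤ c ∧ ((c : ℕ) : ZMod m) = d)).card
      = cnt m b d := by
  have hz : b - a = 0 := by omega
  simp only [hz, Nat.zero_le, true_and]
  rfl

lemma cnt_filter_ge (a b : ℕ) (d : ZMod m) (hab : a ≤ b) :
    cnt m b d = ((Finset.range b).filter
        (fun c => b - a ≤ c ∧ ((c : ℕ) : ZMod m) = d)).card + cnt m (b - a) d := by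
  have h1 : (Finset.range b).filter (fun c => b - a ≤ c ∧ ((c : ℕ) : ZMod m) = d)
      = (Finset.Ico (b - a) b).filter (fun c => ((c : ℕ) : ZMod m) = d) := by
    ext c
    simp only [Finset.mem_filter, Finset.mem_Ico, Finset.mem_range]
    tauto
  have h2 : Finset.range b = Finset.range (b - a) ∪ Finset.Ico (b - a) b := by
    rw [Finset.range_eq_Ico, Finset.range_eq_Ico,
      Finset.Ico_union_Ico_eq_Ico (Nat.zero_le _) (Nat.sub_le _ _)]
  have h3 : Disjoint (Finset.range (b - a)) (Finset.Ico (b - a) b) := by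
    rw [Finset.range_eq_Ico]
    exact Finset.Ico_disjoint_Ico_consecutive 0 (b - a) b
  conv_lhs => rw [cnt, h2]
  rw [Finset.filter_union, Finset.card_union_of_disjoint
    (Finset.disjoint_filter_filter h3), h1, cnt]
  ring

lemma one_ne_zero_zmod (hm : 2 ≤ m) : (1 : ZMod m) ≠ 0 := by
  haveI : Fact (1 < m) := ⟨by omega⟩
  exact one_ne_zero

lemma count_key (hm : 2 ≤ m) (r s : ℕ) (hrs : s < r)
    (dA dB dC dD dE dF dG dH : ZMod m)
    (hA : dA = 0) (hB : dB = 1) (hC : dC = -1) (hD : dD = 0)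
    (hE : dE = 0) (hF : dF = -1) (hG : dG = 1) (hH : dH = 0) :
    ((Finset.range r).filter (fun c => r - r ≤ c ∧ ((c : ℕ) : ZMod m) = dA)).card
      + ((Finset.range (s+1)).filter (fun c => (s+1) - r ≤ c ∧ ((c : ℕ) : ZMod m) = dB)).card
      + ((Finset.range r).filter (fun c => r - (s+1) ≤ c ∧ ((c : ℕ) : ZMod m) = dC)).card
      + ((Finset.range (s+1)).filter
          (fun c => (s+1) - (s+1) ≤ c ∧ ((c : ℕ) : ZMod m) = dD)).card
      = ((Finset.range (r+1)).filter
          (fun c => (r+1) - (r+1) ≤ c ∧ ((c : ℕ) : ZMod m) = dE)).card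
      + ((Finset.range s).filter (fun c => s - (r+1) ≤ c ∧ ((c : ℕ) : ZMod m) = dF)).card
      + ((Finset.range (r+1)).filter (fun c => (r+1) - s ≤ c ∧ ((c : ℕ) : ZMod m) = dG)).card
      + ((Finset.range s).filter (fun c => s - s ≤ c ∧ ((c : ℕ) : ZMod m) = dH)).card + 1 := by
  subst hA hB hC hD hE hF hG hH
  have hone := one_ne_zero_zmod m hm
  have h1 := filter_card_all m r r (0 : ZMod m) le_rfl
  have h2 := filter_card_all m r (s+1) (1 : ZMod m) (by omega)
  have h3 := cnt_filter_ge m (s+1) r (-1 : ZMod m) (by omega)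
  have h4 := filter_card_all m (s+1) (s+1) (0 : ZMod m) le_rfl
  have h5 := filter_card_all m (r+1) (r+1) (0 : ZMod m) le_rfl
  have h6 := filter_card_all m (r+1) s (-1 : ZMod m) (by omega)
  have h7 := cnt_filter_ge m s (r+1) (1 : ZMod m) (by omega)
  have h8 := filter_card_all m s s (0 : ZMod m) le_rfl
  have r1 : cnt m (s+1) 1 = cnt m s 0 := by
    have h := cnt_shift (m := m) s (0 : ZMod m)
    rw [zero_add, if_neg hone, add_zero] at h
    exact h
  have r5 : cnt m (r+1) 1 = cnt m r 0 := by
    have h := cnt_shift (m := m) r (0 : ZMod m)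
    rw [zero_add, if_neg hone, add_zero] at h
    exact h
  have r2 : cnt m (r+1) 0 = cnt m r (-1) + 1 := by
    have h := cnt_shift (m := m) r (-1 : ZMod m)
    rw [neg_add_cancel, if_pos rfl] at h
    exact h
  have r3 : cnt m (r - s) 0 = cnt m (r - (s+1)) (-1) + 1 := by
    have h := cnt_shift (m := m) (r - (s+1)) (-1 : ZMod m)
    rw [neg_add_cancel, if_pos rfl, show r - (s+1) + 1 = r - s from by omega] at h
    exact h
  have r4 : cnt m (s+1) 0 = cnt m s (-1) + 1 := by
    have h := cnt_shift (m := m) s (-1 : ZMod m)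
    rw [neg_add_cancel, if_pos rfl] at h
    exact h
  have r6 : cnt m (r+1-s) 1 = cnt m (r - s) 0 := by
    have h := cnt_shift (m := m) (r - s) (0 : ZMod m)
    rw [zero_add, if_neg hone, add_zero, show r - s + 1 = r + 1 - s from by omega] at h
    exact h
  omega

end Count


/-- Let `k` be a field and `m ≥ 2`. For every vertex `i ∈ ℤ/m` and all
integers `r > s ≥ 0`, one has
`dim_k End(S_{i+1}(r) ⊕ S_i(s+1)) = dim_k End(S_i(r+1) ⊕ S_{i+1}(s)) + 1`,
where direct sums carry the componentwise grading and operator. -/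
theorem dim_end_sum_comparison (hm : 2 ≤ m) (i : ZMod m) (r s : ℕ) (hrs : s < r) :
    finrank k (RepHom k m
        (fun j => (sGrading k m (i + 1) r j).prod (sGrading k m i (s + 1) j))
        ((shiftMap k r).prodMap (shiftMap k (s + 1)))
        (fun j => (sGrading k m (i + 1) r j).prod (sGrading k m i (s + 1) j))
        ((shiftMap k r).prodMap (shiftMap k (s + 1))))
      = finrank k (RepHom k m
        (fun j => (sGrading k m i (r + 1) j).prod (sGrading k m (i + 1) s j))
        ((shiftMap k (r + 1)).prodMap (shiftMap k s))
        (fun j => (sGrading k m i (r + 1) j).prod (sGrading k m (i + 1) s j))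
        ((shiftMap k (r + 1)).prodMap (shiftMap k s))) + 1 := by
  rw [finrank_repHom_prod (sGrading k m (i + 1) r) (shiftMap k r) (sGrading k m i (s + 1))
      (shiftMap k (s + 1)) (sGrading k m (i + 1) r) (shiftMap k r) (sGrading k m i (s + 1))
      (shiftMap k (s + 1)),
    finrank_repHom_prod (sGrading k m i (r + 1)) (shiftMap k (r + 1)) (sGrading k m (i + 1) s)
      (shiftMap k s) (sGrading k m i (r + 1)) (shiftMap k (r + 1)) (sGrading k m (i + 1) s)
      (shiftMap k s),
    finrank_repHom_single (i + 1) (i + 1) r r,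
    finrank_repHom_single (i + 1) i r (s + 1),
    finrank_repHom_single i (i + 1) (s + 1) r,
    finrank_repHom_single i i (s + 1) (s + 1),
    finrank_repHom_single i i (r + 1) (r + 1),
    finrank_repHom_single i (i + 1) (r + 1) s,
    finrank_repHom_single (i + 1) i s (r + 1),
    finrank_repHom_single (i + 1) (i + 1) s s]
  exact count_key m hm r s hrs ((i + 1) - (i + 1)) ((i + 1) - i) (i - (i + 1)) (i - i)
    (i - i) (i - (i + 1)) ((i + 1) - i) ((i + 1) - (i + 1))
    (by ring) (by ring) (by ring) (by ring) (by ring) (by ring) (by ring) (by ring)
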